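/- arXiv:1504.04368 — 2 statements merged into one kernel-verified Lean document; each statement's English description precedes it below -/
import Mathlib

section
/- Let X be a Banach space with a Schauder basis (eₙ) with biorthogonal functionals (eₙ*). If for every N and every x the greedy approximation satisfies ‖G_N(x)‖ ≤ ‖x‖, then for all finitely supported vectors x and y with disjoint supports, ‖x‖ ≤ ‖x + y‖. -/
open Finset Filter

/-- A Schauder basis of a real Banach space, given with its biorthogonal functionals. -/
structure SchauderBasis' (X : Type*) [NormedAddCommGroup X] [NormedSpace ℝ X] where
  e : ℕ → X
  coord : ℕ → X →L[ℝ] ℝ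
  biorth : ∀ m n, coord m (e n) = if m = n then 1 else 0
  expansion : ∀ x : X, Tendsto (fun N => ∑ n ∈ Finset.range N, coord n x • e n)
    atTop (nhds x)

/-- `Λ` is an admissible greedy set for `x`: every coefficient inside `Λ`
dominates every coefficient outside. -/
def IsGreedySet {X : Type*} [NormedAddCommGroup X] [NormedSpace ℝ X]
    (B : SchauderBasis' X) (x : X) (Λ : Finset ℕ) : Prop :=
  ∀ j ∈ Λ, ∀ k ∉ Λ, |B.coord k x| ≤ |B.coord j x|

/-- The corresponding greedy approximation `G_N(x)` with greedy set `Λ`. -/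
noncomputable def greedySum {X : Type*} [NormedAddCommGroup X] [NormedSpace ℝ X]
    (B : SchauderBasis' X) (x : X) (Λ : Finset ℕ) : X :=
  ∑ j ∈ Λ, B.coord j x • B.e j

/-- The basis is semi-normalized. -/
def SemiNormalized {X : Type*} [NormedAddCommGroup X] [NormedSpace ℝ X]
    (B : SchauderBasis' X) : Prop :=
  ∃ c C : ℝ, 0 < c ∧ ∀ n, c ≤ ‖B.e n‖ ∧ ‖B.e n‖ ≤ C

lemma coord_finsum {X : Type*} [NormedAddCommGroup X] [NormedSpace ℝ X]
    (B : SchauderBasis' X) (S : Finset ℕ) (a : ℕ → ℝ) (k : ℕ) :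
    B.coord k (∑ n ∈ S, a n • B.e n) = if k ∈ S then a k else 0 := by
  rw [map_sum]
  have h : ∀ n ∈ S, B.coord k (a n • B.e n) = if k = n then a n else 0 := by
    intro n _
    rw [ContinuousLinearMap.map_smul, B.biorth k n]
    split <;> simp
  rw [Finset.sum_congr rfl h, Finset.sum_ite_eq]

theorem disjoint_support_norm_le_of_Cw_one {X : Type*} [NormedAddCommGroup X]
    [NormedSpace ℝ X] [CompleteSpace X] (B : SchauderBasis' X)
    (hG : ∀ (x : X) (Λ : Finset ℕ), IsGreedySet B x Λ → ‖greedySum B x Λ‖ ≤ ‖x‖)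
    (S T : Finset ℕ) (hST : Disjoint S T) (a b : ℕ → ℝ)
    (x y : X) (hx : x = ∑ n ∈ S, a n • B.e n) (hy : y = ∑ n ∈ T, b n • B.e n) :
    ‖x‖ ≤ ‖x + y‖ := by
  set Λ : Finset ℕ := S.filter (fun n => a n ≠ 0) with hΛ
  have hΛS : Λ ⊆ S := Finset.filter_subset _ _
  have hxΛ : x = ∑ n ∈ Λ, a n • B.e n := by
    rw [hx, Finset.sum_filter_of_ne]
    intro n _ h ha
    exact h (by rw [ha, zero_smul])
  by_cases hΛe : Λ = ∅
  · have hx0 : x = 0 := by rw [hxΛ, hΛe]; simp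
    rw [hx0, zero_add]; simp
  have hΛne : Λ.Nonempty := Finset.nonempty_iff_ne_empty.mpr hΛe
  obtain ⟨m, hmΛ, hm⟩ := Λ.exists_min_image (fun n => |a n|) hΛne
  have hm0 : 0 < |a m| := abs_pos.mpr (Finset.mem_filter.mp hmΛ).2
  set M : ℝ := ∑ n ∈ T, |b n| with hM
  have hM0 : 0 ≤ M := Finset.sum_nonneg fun n _ => abs_nonneg _
  have hMb : ∀ k ∈ T, |b k| ≤ M := fun k hk =>
    Finset.single_le_sum (fun n _ => abs_nonneg (b n)) hk
  set t : ℝ := min 1 (|a m| / (M + 1)) with ht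
  have ht0 : 0 < t := lt_min one_pos (div_pos hm0 (by linarith))
  have ht1 : t ≤ 1 := min_le_left _ _
  have htM : ∀ k ∈ T, t * |b k| ≤ |a m| := by
    intro k hk
    have h1 : t ≤ |a m| / (M + 1) := min_le_right _ _
    have h2 : |b k| ≤ M := hMb k hk
    have h3 : t * |b k| ≤ (|a m| / (M + 1)) * M := by
      apply mul_le_mul h1 h2 (abs_nonneg _) (le_of_lt (div_pos hm0 (by linarith)))
    have h4 : (|a m| / (M + 1)) * M ≤ |a m| := by
      rw [div_mul_eq_mul_div, div_le_iff₀ (by linarith)]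
      nlinarith
    linarith
  -- the perturbed vector
  set z : X := x + t • y with hz
  have hcoord : ∀ k, B.coord k z =
      (if k ∈ S then a k else 0) + t * (if k ∈ T then b k else 0) := by
    intro k
    rw [hz, map_add, ContinuousLinearMap.map_smul, hx, hy,
      coord_finsum, coord_finsum]
    simp
  have hcoordΛ : ∀ j ∈ Λ, B.coord j z = a j := by
    intro j hj
    have hjS : j ∈ S := hΛS hj
    have hjT : j ∉ T := Finset.disjoint_left.mp hST hjS
    rw [hcoord j, if_pos hjS, if_neg hjT, mul_zero, add_zero]
  have hgreedy : IsGreedySet B z Λ := by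
    intro j hj k hk
    rw [hcoordΛ j hj]
    have hja : |a m| ≤ |a j| := hm j hj
    rw [hcoord k]
    by_cases hkS : k ∈ S
    · have hkT : k ∉ T := Finset.disjoint_left.mp hST hkS
      have hak : a k = 0 := by
        by_contra h
        exact hk (Finset.mem_filter.mpr ⟨hkS, h⟩)
      rw [if_pos hkS, if_neg hkT, hak, mul_zero, add_zero, abs_zero]
      positivity
    · rw [if_neg hkS, zero_add]
      by_cases hkT : k ∈ T
      · rw [if_pos hkT, abs_mul, abs_of_pos ht0]
        exact le_trans (htM k hkT) hja
      · rw [if_neg hkT, mul_zero, abs_zero]; positivity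
  have hsum : greedySum B z Λ = x := by
    rw [greedySum, Finset.sum_congr rfl fun j hj => by rw [hcoordΛ j hj], ← hxΛ]
  have hle : ‖x‖ ≤ ‖z‖ := by
    have := hG z Λ hgreedy
    rwa [hsum] at this
  -- z = (1 - t) • x + t • (x + y)
  have hzdecomp : z = (1 - t) • x + t • (x + y) := by
    rw [hz]; module
  have hzle : ‖z‖ ≤ (1 - t) * ‖x‖ + t * ‖x + y‖ := by
    rw [hzdecomp]
    refine le_trans (norm_add_le _ _) ?_
    rw [norm_smul, norm_smul, Real.norm_eq_abs, Real.norm_eq_abs,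
      abs_of_nonneg (by linarith : (0:ℝ) ≤ 1 - t), abs_of_pos ht0]
  nlinarith [hle, hzle, ht0, norm_nonneg x, norm_nonneg (x + y)]
end

section
/- Let H be a Hilbert space with a semi-normalized Schauder basis (eₙ) satisfying ‖G_N(x)‖ ≤ ‖x‖ for all x, N, and admissible greedy sets (C_w = 1). Then the basis is orthogonal: ⟨e_i, e_j⟩ = 0 for all i ≠ j. -/
open Finset Filter

/-- A Schauder basis over a real or complex field, with biorthogonal functionals. -/
structure SchauderBasisK (𝕜 : Type*) [RCLike 𝕜] (X : Type*) [NormedAddCommGroup X]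
    [NormedSpace 𝕜 X] where
  e : ℕ → X
  coord : ℕ → X →L[𝕜] 𝕜
  biorth : ∀ m n, coord m (e n) = if m = n then 1 else 0
  expansion : ∀ x : X, Tendsto (fun N => ∑ n ∈ Finset.range N, coord n x • e n)
    atTop (nhds x)

def IsGreedySetK {𝕜 : Type*} [RCLike 𝕜] {X : Type*} [NormedAddCommGroup X]
    [NormedSpace 𝕜 X] (B : SchauderBasisK 𝕜 X) (x : X) (Λ : Finset ℕ) : Prop :=
  ∀ j ∈ Λ, ∀ k ∉ Λ, ‖B.coord k x‖ ≤ ‖B.coord j x‖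

noncomputable def greedySumK {𝕜 : Type*} [RCLike 𝕜] {X : Type*} [NormedAddCommGroup X]
    [NormedSpace 𝕜 X] (B : SchauderBasisK 𝕜 X) (x : X) (Λ : Finset ℕ) : X :=
  ∑ j ∈ Λ, B.coord j x • B.e j

def SemiNormalizedK {𝕜 : Type*} [RCLike 𝕜] {X : Type*} [NormedAddCommGroup X]
    [NormedSpace 𝕜 X] (B : SchauderBasisK 𝕜 X) : Prop :=
  ∃ c C : ℝ, 0 < c ∧ ∀ n, c ≤ ‖B.e n‖ ∧ ‖B.e n‖ ≤ C

theorem basis_orthogonal_of_Cw_one {𝕜 : Type*} [RCLike 𝕜] {H : Type*}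
    [NormedAddCommGroup H] [InnerProductSpace 𝕜 H] [CompleteSpace H]
    (B : SchauderBasisK 𝕜 H) (hsn : SemiNormalizedK B)
    (hG : ∀ (x : H) (Λ : Finset ℕ), IsGreedySetK B x Λ → ‖greedySumK B x Λ‖ ≤ ‖x‖) :
    ∀ i j, i ≠ j → (inner 𝕜 (B.e i) (B.e j) : 𝕜) = 0 := by

  intro i j hij
  by_contra ha
  set a : 𝕜 := inner 𝕜 (B.e i) (B.e j) with ha_def
  have ha' : (0:ℝ) < ‖a‖ := norm_pos_iff.mpr ha
  set s : ℝ := max 1 ((‖B.e i‖^2 + 1) / (2 * ‖a‖)) with hs_def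
  have hs1 : (1:ℝ) ≤ s := le_max_left _ _
  have hs0 : (0:ℝ) < s := lt_of_lt_of_le one_pos hs1
  set t : 𝕜 := (s : 𝕜) * (-(starRingEnd 𝕜 a) / ‖a‖) with ht_def
  have hnt : ‖t‖ = s := by
    rw [ht_def, norm_mul, norm_div, norm_neg, RCLike.norm_conj, RCLike.norm_ofReal,
      RCLike.norm_ofReal, abs_norm, abs_of_pos hs0, div_self (ne_of_gt ha'), mul_one]
  have hta : RCLike.re (t * a) = -(s * ‖a‖) := by
    have : t * a = (s:𝕜) * (-(starRingEnd 𝕜 a * a) / ‖a‖) := by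
      rw [ht_def]; ring
    rw [this, RCLike.conj_mul]
    have hb : ((‖a‖:ℝ):𝕜) ≠ 0 := by exact_mod_cast ne_of_gt ha'
    have : ((s:𝕜) * (-((‖a‖:𝕜)^2) / (‖a‖:𝕜))) = ((-(s * ‖a‖) : ℝ) : 𝕜) := by
      push_cast
      field_simp
    rw [this, RCLike.ofReal_re]
  set x : H := B.e i + t • B.e j with hx_def
  have hcoord : ∀ k, B.coord k x = (if k = i then 1 else 0) + t * (if k = j then 1 else 0) := by
    intro k
    rw [hx_def]
    simp [B.biorth, mul_comm]
  have hgreedy : IsGreedySetK B x {j} := by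
    intro j' hj' k hk
    simp only [Finset.mem_singleton] at hj' hk
    subst hj'
    rw [hcoord, hcoord]
    simp only [if_neg hk, if_pos rfl, mul_one, mul_zero, add_zero]
    by_cases hki : k = i
    · simp [hki, Ne.symm hij, hnt, hs1]
    · simp [hki, hnt, le_of_lt hs0]
  have hsum : greedySumK B x {j} = t • B.e j := by
    rw [greedySumK, Finset.sum_singleton, hcoord]
    simp [Ne.symm hij]
  have hle := hG x {j} hgreedy
  rw [hsum] at hle
  have hle2 : ‖t • B.e j‖^2 ≤ ‖x‖^2 := by
    apply sq_le_sq' _ hle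
    linarith [norm_nonneg (t • B.e j), norm_nonneg x]
  rw [hx_def] at hle2
  rw [@norm_add_sq 𝕜] at hle2
  have hinner : inner 𝕜 (B.e i) (t • B.e j) = t * a := by
    rw [inner_smul_right, ha_def]
  rw [hinner, hta] at hle2
  have hkey : 2 * (s * ‖a‖) ≤ ‖B.e i‖^2 := by nlinarith [sq_nonneg ‖B.e i‖]
  have hs2 : (‖B.e i‖^2 + 1) / (2 * ‖a‖) ≤ s := le_max_right _ _
  have : ‖B.e i‖^2 + 1 ≤ 2 * ‖a‖ * s := by
    rw [div_le_iff₀ (by linarith)] at hs2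
    linarith
  nlinarith
end
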